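/- The cycle graph C_n is a 2-variegated graph if and only if n ≡ 0 (mod 4). -/

import Mathlib

open SimpleGraph
open scoped Classical

/-- A graph is 2-variegated (bivariegated) if its vertex set can be partitioned into
two equinumerous parts such that every vertex is adjacent to exactly one vertex
of the part not containing it. -/
def SimpleGraph.IsBivariegated {V : Type*} (G : SimpleGraph V) : Prop :=
  ∃ f : V → Bool,
    Nonempty ({v // f v = true} ≃ {v // f v = false}) ∧
    ∀ v : V, ∃! w : V, f w ≠ f v ∧ G.Adj v w
open Fin.NatCast Fin.CommRing
set_option maxHeartbeats 1000000 in
theorem cycleGraph_bivariegated_iff (n : ℕ) (hn : 3 ≤ n) :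
    (cycleGraph n).IsBivariegated ↔ n % 4 = 0 := by
  obtain ⟨m, rfl⟩ : ∃ m, n = m + 2 := ⟨n - 2, by omega⟩
  have hm : 1 ≤ m := by omega
  have h2v : ((2 : Fin (m+2)) : ℕ) = 2 := by
    rw [show (2 : Fin (m+2)) = 1 + 1 by norm_num, Fin.val_add, Fin.val_one]
    exact Nat.mod_eq_of_lt (by omega)
  have hadj : ∀ v w : Fin (m+2), (cycleGraph (m+2)).Adj v w ↔ w = v + 1 ∨ w = v - 1 := by
    intro v w
    rw [cycleGraph_adj]
    constructor
    · rintro (h | h)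
      · right; rw [eq_sub_iff_add_eq]; rw [sub_eq_iff_eq_add'] at h; exact h.symm
      · left; rw [sub_eq_iff_eq_add'] at h; exact h
    · rintro (rfl | rfl)
      · right; simp
      · left; exact sub_sub_cancel v 1
  have hne2 : ∀ v : Fin (m+2), v ≠ v + 2 := by
    intro v h
    have hv := v.isLt
    have := congrArg Fin.val h
    rw [Fin.val_add, h2v] at this
    rcases lt_or_ge (v.val + 2) (m+2) with h' | h'
    · rw [Nat.mod_eq_of_lt h'] at this; omega
    · rw [Nat.mod_eq_sub_mod h', Nat.mod_eq_of_lt (by omega)] at this; omega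
  constructor
  · rintro ⟨f, -, hf⟩
    have key : ∀ v : Fin (m+2), f (v + 2) = !f v := by
      intro v
      obtain ⟨w, ⟨hw1, hw2⟩, huniq⟩ := hf (v + 1)
      rw [hadj] at hw2
      have hv2 : (v+1)+1 = v + 2 := by ring
      have hv0 : (v+1)-1 = v := add_sub_cancel_right v 1
      rw [hv2, hv0] at hw2
      by_contra hcon
      have hfv2 : f (v + 2) = f v := by
        cases h : f v <;> cases h' : f (v+2) <;>
          first
          | rfl
          | (rw [h, h'] at hcon; exact absurd rfl hcon)
      rcases hw2 with hww | hww
      · subst hww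
        have hv : v = v + 2 := huniq v ⟨by rw [← hfv2]; exact hw1,
          (hadj (v+1) v).mpr (Or.inr hv0.symm)⟩
        exact hne2 v hv
      · subst hww
        have hv : w + 2 = w := huniq (w+2) ⟨by rw [hfv2]; exact hw1,
          (hadj (w+1) (w+2)).mpr (Or.inl hv2.symm)⟩
        exact hne2 w hv.symm
    have key2 : ∀ k : ℕ, f ((2*k : ℕ) : Fin (m+2)) = xor (decide (k % 2 = 1)) (f 0) := by
      intro k
      induction k with
      | zero => simp
      | succ k ih =>
        have hc : ((2*(k+1) : ℕ) : Fin (m+2)) = ((2*k : ℕ) : Fin (m+2)) + 2 := by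
          push_cast; ring
        rw [hc, key, ih]
        rcases Nat.mod_two_eq_zero_or_one k with h | h
        · have h' : (k+1) % 2 = 1 := by omega
          simp [h, h']
        · have h' : (k+1) % 2 = 0 := by omega
          simp [h, h']
    have heven : (m + 2) % 2 = 0 := by
      have h := key2 (m+2)
      have hc02 : ((2*(m+2) : ℕ) : Fin (m+2)) = 0 := by
        rw [Nat.cast_mul, Fin.natCast_self, mul_zero]
      rw [hc02] at h
      cases h0 : f 0 <;> rw [h0] at h <;> simp at h <;> omega
    obtain ⟨t, ht⟩ : ∃ t, m + 2 = 2 * t := ⟨(m+2)/2, by omega⟩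
    have h := key2 t
    rw [← ht, show ((m+2:ℕ) : Fin (m+2)) = 0 from Fin.natCast_self _] at h
    have ht2 : t % 2 = 0 := by
      cases h0 : f 0 <;> rw [h0] at h <;> simp at h <;> omega
    omega
  · intro h4
    have hdvd : 4 ∣ m + 2 := by omega
    set f : Fin (m+2) → Bool := fun v => decide (v.val % 4 = 1 ∨ v.val % 4 = 2) with hfdef
    have hfval : ∀ v : Fin (m+2), f v = decide (v.val % 4 = 1 ∨ v.val % 4 = 2) :=
      fun v => rfl
    have key : ∀ v : Fin (m+2), f (v + 2) = !f v := by
      intro v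
      have hval : (v+2).val % 4 = (v.val + 2) % 4 := by
        rw [Fin.val_add, h2v, Nat.mod_mod_of_dvd _ hdvd]
      rw [hfval, hfval, hval]
      simp only [Bool.eq_not, ne_eq, decide_eq_decide]
      omega
    refine ⟨f, ⟨⟨fun p => ⟨p.1 + 2, by rw [key, p.2]; rfl⟩,
      fun p => ⟨p.1 - 2, by
        have h := key (p.1 - 2)
        rw [sub_add_cancel, p.2] at h
        cases hb : f (p.1 - 2)
        · rw [hb] at h; exact absurd h.symm (by simp)
        · rfl⟩,
      fun p => Subtype.ext (add_sub_cancel_right p.1 2),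
      fun p => Subtype.ext (sub_add_cancel p.1 2)⟩⟩, ?_⟩
    intro v
    have hval1 : (v+1).val % 4 = (v.val + 1) % 4 := by
      rw [Fin.val_add, Fin.val_one, Nat.mod_mod_of_dvd _ hdvd]
    have hval3 : (v-1).val % 4 = (v.val + 3) % 4 := by
      rw [Fin.sub_def]
      simp only [Fin.val_one]
      rw [Nat.mod_mod_of_dvd _ hdvd]
      omega
    have hplus : (f (v+1) ≠ f v) ↔ (v.val % 4 = 0 ∨ v.val % 4 = 2) := by
      rw [hfval, hfval]
      simp only [ne_eq, decide_eq_decide, hval1]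
      omega
    have hminus : (f (v-1) ≠ f v) ↔ (v.val % 4 = 1 ∨ v.val % 4 = 3) := by
      rw [hfval, hfval]
      simp only [ne_eq, decide_eq_decide, hval3]
      omega
    by_cases hc : v.val % 4 = 0 ∨ v.val % 4 = 2
    · refine ⟨v + 1, ⟨hplus.mpr hc, (hadj v (v+1)).mpr (Or.inl rfl)⟩, ?_⟩
      rintro w ⟨hw1, hw2⟩
      rcases (hadj v w).mp hw2 with rfl | rfl
      · rfl
      · have := hminus.mp hw1; omega
    · have hc' : v.val % 4 = 1 ∨ v.val % 4 = 3 := by omega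
      refine ⟨v - 1, ⟨hminus.mpr hc', (hadj v (v-1)).mpr (Or.inr rfl)⟩, ?_⟩
      rintro w ⟨hw1, hw2⟩
      rcases (hadj v w).mp hw2 with rfl | rfl
      · have := hplus.mp hw1; omega
      · rfl
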